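/- For all integers N ≥ 1, d ≥ 1 and every Young diagram λ with exactly d cells and at most N rows, ∏_{(i,j) ∈ λ} (N + j − i) > N^d · e^{−d}. -/

import Mathlib

noncomputable section

open Finset

lemma stepLT (m : ℕ) : ((m : ℝ) + 1) ^ m < Real.exp 1 * (m : ℝ) ^ m := by
  rcases Nat.eq_zero_or_pos m with h | h
  · subst h; simpa using Real.one_lt_exp (by norm_num : (0:ℝ) < 1)
  · have hm : (0:ℝ) < m := by exact_mod_cast h
    have h1 : (1 : ℝ)/m + 1 < Real.exp (1/m) := Real.add_one_lt_exp (by positivity)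
    have h2 : ((1 : ℝ)/m + 1) ^ m < Real.exp (1/m) ^ m :=
      pow_lt_pow_left₀ h1 (by positivity) h.ne'
    have h3 : Real.exp (1/m) ^ m = Real.exp 1 := by
      rw [← Real.exp_nat_mul]; congr 1; field_simp
    have h4 : (((1 : ℝ)/m + 1) * m) ^ m < Real.exp 1 * (m:ℝ) ^ m := by
      rw [mul_pow]
      calc ((1 : ℝ)/m + 1) ^ m * (m:ℝ)^m < Real.exp (1/m) ^ m * (m:ℝ)^m := by
            exact mul_lt_mul_of_pos_right h2 (by positivity)
        _ = Real.exp 1 * (m:ℝ)^m := by rw [h3]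
    have h5 : ((1 : ℝ)/m + 1) * m = (m:ℝ) + 1 := by field_simp; ring
  
    rwa [h5] at h4

lemma claimLT (N : ℕ) : ∀ c, 1 ≤ c → c ≤ N →
    (N : ℝ) ^ N < Real.exp c * ((N - c : ℕ) : ℝ) ^ (N - c) * ∏ j ∈ range c, ((N : ℝ) - j) := by
  intro c
  induction c with
  | zero => intro h; omega
  | succ c ih =>
    intro _ hcN
    have hprod : ∏ j ∈ range (c+1), ((N : ℝ) - j)
        = (∏ j ∈ range c, ((N : ℝ) - j)) * ((N:ℝ) - c) := prod_range_succ _ _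
    have hpos : (0:ℝ) < ∏ j ∈ range c, ((N : ℝ) - j) := by
      apply prod_pos; intro j hj
      simp only [mem_range] at hj
      have : j < N := by omega
      have : (j:ℝ) < N := by exact_mod_cast this
      linarith
    rcases Nat.eq_zero_or_pos c with hc0 | hc1
    · subst hc0
      -- N^N < exp 1 * (N-1)^(N-1) * N
      have hstep := stepLT (N - 1)
      have hN1 : ((N - 1 : ℕ) : ℝ) + 1 = (N:ℝ) := by
        have : 1 ≤ N := by omega
        push_cast [this]; ring
      have hNN : (N:ℝ)^N = ((N:ℝ))^(N-1) * (N:ℝ) := by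
        rw [← pow_succ]; congr 1; omega
      rw [hNN]
      simp only [hprod, range_zero, prod_empty, one_mul]
      have hNpos : (0:ℝ) < N := by exact_mod_cast (by omega : 0 < N)
      calc (N:ℝ)^(N-1) * (N:ℝ) < (Real.exp 1 * ((N-1:ℕ):ℝ)^(N-1)) * (N:ℝ) := by
            apply mul_lt_mul_of_pos_right _ hNpos
            rw [← hN1]; exact hstep
        _ = Real.exp 1 * ((N-1:ℕ):ℝ)^(N-1) * ((N:ℝ) - 0) := by push_cast; ring
        _ = Real.exp (((0+1:ℕ)):ℝ) * ((N-(0+1):ℕ):ℝ)^(N-(0+1)) * ((N:ℝ) - ((0:ℕ):ℝ)) := by push_cast; norm_num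
    · have ihc := ih hc1 (by omega)
      have hstep' : ((N - c : ℕ):ℝ) ^ (N - c) ≤ Real.exp 1 * ((N - (c+1) : ℕ):ℝ)^(N-(c+1)) * ((N:ℝ) - c) := by
        set m := N - (c + 1) with hm
        have hNc : N - c = m + 1 := by omega
        have hcast : ((N - c : ℕ):ℝ) = (m:ℝ) + 1 := by rw [hNc]; push_cast; ring
        have hcast2 : (N:ℝ) - c = (m:ℝ) + 1 := by
          have : (N:ℕ) = m + 1 + c := by omega
          rw [this]; push_cast; ring
        rw [hcast, hcast2, hNc, pow_succ]
        have := (stepLT m).le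
        have hmp : (0:ℝ) ≤ (m:ℝ) + 1 := by positivity
        nlinarith [this, hmp]
      calc (N:ℝ)^N < Real.exp c * ((N - c : ℕ):ℝ)^(N-c) * ∏ j ∈ range c, ((N : ℝ) - j) := ihc
        _ ≤ Real.exp c * (Real.exp 1 * ((N - (c+1) : ℕ):ℝ)^(N-(c+1)) * ((N:ℝ) - c)) * ∏ j ∈ range c, ((N : ℝ) - j) := by
            apply mul_le_mul_of_nonneg_right _ hpos.le
            exact mul_le_mul_of_nonneg_left hstep' (Real.exp_pos _).le
        _ = Real.exp (((c+1:ℕ)):ℝ) * ((N - (c+1) : ℕ):ℝ)^(N-(c+1)) * ∏ j ∈ range (c+1), ((N : ℝ) - j) := by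
            rw [hprod]; push_cast; rw [Real.exp_add]; ring

lemma key (N c : ℕ) (h1 : 1 ≤ c) (h2 : c ≤ N) :
    (N : ℝ) ^ c * Real.exp (-(c : ℝ)) < ∏ j ∈ range c, ((N : ℝ) - j) := by
  have hmain := claimLT N c h1 h2
  have hpos : (0:ℝ) < ∏ j ∈ range c, ((N : ℝ) - j) := by
    apply prod_pos; intro j hj
    simp only [mem_range] at hj
    have : (j:ℝ) < N := by exact_mod_cast (by omega : j < N)
    linarith
  have hle : ((N - c : ℕ):ℝ)^(N-c) ≤ (N:ℝ)^(N-c) := by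
    apply pow_le_pow_left₀ (by positivity)
    exact_mod_cast Nat.sub_le N c
  have h3 : (N:ℝ)^N < Real.exp c * (N:ℝ)^(N-c) * ∏ j ∈ range c, ((N : ℝ) - j) := by
    calc (N:ℝ)^N < Real.exp c * ((N - c : ℕ):ℝ)^(N-c) * ∏ j ∈ range c, ((N : ℝ) - j) := hmain
      _ ≤ _ := by
          apply mul_le_mul_of_nonneg_right _ hpos.le
          exact mul_le_mul_of_nonneg_left hle (Real.exp_pos _).le
  have hsplit : (N:ℝ)^N = (N:ℝ)^(N-c) * (N:ℝ)^c := by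
    rw [← pow_add]; congr 1; omega
  have hNpos : (0:ℝ) < (N:ℝ)^(N-c) := by
    have : (0:ℝ) < N := by exact_mod_cast (by omega : 0 < N)
    positivity
  have h4 : (N:ℝ)^c < Real.exp c * ∏ j ∈ range c, ((N : ℝ) - j) := by
    rw [hsplit] at h3
    nlinarith [h3, hNpos]
  have hexp : Real.exp (-(c:ℝ)) = (Real.exp c)⁻¹ := by rw [Real.exp_neg]
  rw [hexp]
  rw [mul_inv_lt_iff₀ (Real.exp_pos _)] at *
  linarith [h4]

/-- The content of the cell in row `i` and column `j` (0-indexed) is `j - i`. -/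
def content (c : ℕ × ℕ) : ℤ := (c.2 : ℤ) - (c.1 : ℤ)

/-- For `N ≥ 1`, `d ≥ 1` and any Young diagram `λ` with exactly `d` cells and at most `N`
rows, `∏_{(i,j) ∈ λ} (N + j − i) > N^d e^(−d)`. -/
theorem content_polynomial_gt (N d : ℕ) (hN : 1 ≤ N) (hd : 1 ≤ d)
    (lam : YoungDiagram) (hlam : lam.card = d) (hrows : lam.colLen 0 ≤ N) :
    (N : ℝ) ^ d * Real.exp (-(d : ℝ)) < ∏ c ∈ lam.cells, ((N : ℝ) + (content c : ℝ)) := by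
  set R := lam.rowLen 0 with hR
  -- cells as biUnion of columns
  have hmem : ∀ c : ℕ × ℕ, c ∈ lam → c.2 < R := by
    intro c hc
    have h0 : (0, c.2) ∈ lam := lam.up_left_mem (Nat.zero_le _) le_rfl (by simpa using hc)
    exact (YoungDiagram.mem_iff_lt_rowLen).mp h0
  have hdisj : (↑(range R) : Set ℕ).PairwiseDisjoint lam.col := by
    intro a _ b _ hab
    simp only [Finset.disjoint_left]
    intro c hca hcb
    rw [YoungDiagram.mem_col_iff] at hca hcb
    exact hab (hca.2 ▸ hcb.2.symm ▸ rfl)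
  have hcells : lam.cells = (range R).biUnion lam.col := by
    ext c
    simp only [Finset.mem_biUnion, YoungDiagram.mem_col_iff, YoungDiagram.mem_cells, mem_range]
    constructor
    · intro hc; exact ⟨c.2, hmem c hc, hc, rfl⟩
    · rintro ⟨j, _, hc, _⟩; exact hc
  have hcolprod : ∀ j, ∏ c ∈ lam.col j, ((N : ℝ) + (content c : ℝ))
      = ∏ i ∈ range (lam.colLen j), ((N:ℝ) + j - i) := by
    intro j
    rw [YoungDiagram.col_eq_prod, Finset.prod_product]
    apply Finset.prod_congr rfl
    intro i _
    rw [Finset.prod_singleton]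
    simp [content]; ring
  have hsum : ∑ j ∈ range R, lam.colLen j = d := by
    rw [← hlam]
    unfold YoungDiagram.card
    rw [hcells, Finset.card_biUnion hdisj]
    exact Finset.sum_congr rfl fun j _ => lam.colLen_eq_card (j := j)
  have hRpos : 0 < R := by
    by_contra h
    have : R = 0 := by omega
    have : ∀ j, lam.colLen j = 0 := by
      intro j
      by_contra hcl
      have : (0, j) ∈ lam := YoungDiagram.mem_iff_lt_colLen.mpr (by omega)
      have := hmem _ this
      omega
    have : d = 0 := by rw [← hsum]; simp [this]
    omega
  rw [hcells, Finset.prod_biUnion hdisj]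
  have hmain : ∀ j ∈ range R, (N:ℝ)^(lam.colLen j) * Real.exp (-(lam.colLen j : ℝ))
      < ∏ c ∈ lam.col j, ((N : ℝ) + (content c : ℝ)) := by
    intro j hj
    rw [hcolprod]
    have hcj1 : 1 ≤ lam.colLen j := by
      simp only [mem_range] at hj
      have : (0, j) ∈ lam := YoungDiagram.mem_iff_lt_rowLen.mpr hj
      have := YoungDiagram.mem_iff_lt_colLen.mp this
      omega
    have hcjN : lam.colLen j ≤ N := le_trans (lam.colLen_anti 0 j (Nat.zero_le _)) hrows
    calc (N:ℝ)^(lam.colLen j) * Real.exp (-(lam.colLen j : ℝ))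
        < ∏ i ∈ range (lam.colLen j), ((N:ℝ) - i) := key N _ hcj1 hcjN
      _ ≤ ∏ i ∈ range (lam.colLen j), ((N:ℝ) + j - i) := by
          apply Finset.prod_le_prod
          · intro i hi
            simp only [mem_range] at hi
            have : (i:ℝ) < N := by exact_mod_cast (by omega : i < N)
            linarith
          · intro i _
            have : (0:ℝ) ≤ j := Nat.cast_nonneg j
            linarith
  calc (N : ℝ) ^ d * Real.exp (-(d : ℝ))
      = ∏ j ∈ range R, (N:ℝ)^(lam.colLen j) * Real.exp (-(lam.colLen j : ℝ)) := by
        rw [Finset.prod_mul_distrib, ← Real.exp_sum, prod_pow_eq_pow_sum]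
        · rw [hsum]
          congr 1
          rw [← hsum]
          push_cast
          rw [← Finset.sum_neg_distrib]
    _ < _ := Finset.prod_lt_prod_of_nonempty (fun j hj => by positivity) hmain ⟨0, by simp [hRpos]⟩
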